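/- arXiv:2205.00983 — 3 statements merged into one kernel-verified Lean document; each statement's English description precedes it below -/
import Mathlib

section
/- If G : C ⥤ D is a discrete opfibration and D satisfies property (G2) (all posets |d/D| are Noetherian), then C satisfies property (G2). -/
open CategoryTheory

def DiscreteOpfibration {C : Type*} [Category C] {D : Type*} [Category D] (G : C ⥤ D) : Prop :=
  ∀ (c : C) (d : D) (g : G.obj c ⟶ d),
    ∃! fp : Σ c' : C, c ⟶ c', ∃ h : G.obj fp.1 = d, G.map fp.2 ≫ eqToHom h = g

/-- Property (G2): for every object `c`, the poset `|c/C|` (the poset quotient of the preorder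
`f ≤ g ↔ ∃ h, f ≫ h = g` on morphisms out of `c`) is Noetherian, i.e. every sequence of
morphisms out of `c` contains an increasing pair. -/
def PropertyG2 (C : Type*) [Category C] : Prop :=
  ∀ (c : C) (x : ℕ → Σ c' : C, (c ⟶ c')),
    ∃ i j : ℕ, i < j ∧ ∃ h : (x i).1 ⟶ (x j).1, (x i).2 ≫ h = (x j).2

/-- If `G : C ⥤ D` is a discrete opfibration and `D` satisfies property (G2),
then `C` satisfies property (G2). -/
theorem propertyG2_of_discreteOpfibration {C : Type*} [Category C] {D : Type*} [Category D]
    (G : C ⥤ D) (hG : DiscreteOpfibration G) (hD : PropertyG2 D) : PropertyG2 C := by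
  intro c x
  obtain ⟨i, j, hij, h, hcomm⟩ := hD (G.obj c) (fun n => ⟨G.obj (x n).1, G.map (x n).2⟩)
  simp only at h hcomm
  -- lift h along the opfibration from (x i).1
  obtain ⟨⟨c', k⟩, ⟨heq, hk⟩, -⟩ := hG (x i).1 (G.obj (x j).1) h
  -- uniqueness of lift of G.map (x j).2 from c
  obtain ⟨p, -, huniq⟩ := hG c (G.obj (x j).1) (G.map (x j).2)
  have h1 : (⟨c', (x i).2 ≫ k⟩ : Σ c'' : C, c ⟶ c'') = p := by
    apply huniq
    refine ⟨heq, ?_⟩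
    simp only at hk
    rw [G.map_comp, Category.assoc, hk, hcomm]
  have h2 : (⟨(x j).1, (x j).2⟩ : Σ c'' : C, c ⟶ c'') = p := by
    apply huniq
    exact ⟨rfl, by simp⟩
  have h3 : (⟨c', (x i).2 ≫ k⟩ : Σ c'' : C, c ⟶ c'') = ⟨(x j).1, (x j).2⟩ := h1.trans h2.symm
  obtain ⟨e1, e2⟩ := Sigma.mk.inj_iff.mp h3
  subst e1
  refine ⟨i, j, hij, k, ?_⟩
  exact eq_of_heq e2
end

section
/- Let G : A ⥤ B be a discrete opfibration and Φ : D ⥤ B a functor satisfying property (F). Then the projection functor Φ' : D ×_B A ⥤ A from the pullback category satisfies property (F). -/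
open CategoryTheory

variable {D : Type*} [Category D] {A : Type*} [Category A] {B : Type*} [Category B]

/-- The pullback (fibered product) category `D ×_B A` of `Φ : D ⥤ B` and `G : A ⥤ B`:
objects are pairs `(d, a)` with `Φ.obj d = G.obj a`. -/
structure PullbackCat (Φ : D ⥤ B) (G : A ⥤ B) where
  d : D
  a : A
  eq : Φ.obj d = G.obj a

/-- A morphism in the pullback category: a pair of morphisms with equal images in `B`. -/
@[ext]
structure PullbackCatHom {Φ : D ⥤ B} {G : A ⥤ B} (x y : PullbackCat Φ G) where
  u : x.d ⟶ y.d
  v : x.a ⟶ y.a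
  comm : Φ.map u ≫ eqToHom y.eq = eqToHom x.eq ≫ G.map v

instance (Φ : D ⥤ B) (G : A ⥤ B) : Category (PullbackCat Φ G) where
  Hom := PullbackCatHom
  id x := ⟨𝟙 x.d, 𝟙 x.a, by simp⟩
  comp f g := ⟨f.u ≫ g.u, f.v ≫ g.v, by
    rw [Functor.map_comp, Functor.map_comp, Category.assoc, g.comm, ← Category.assoc,
      f.comm, Category.assoc]⟩

/-- The projection from the pullback category to `D`. -/
def pullbackFst (Φ : D ⥤ B) (G : A ⥤ B) : PullbackCat Φ G ⥤ D where
  obj x := x.d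
  map f := f.u

/-- The projection from the pullback category to `A`. -/
def pullbackSnd (Φ : D ⥤ B) (G : A ⥤ B) : PullbackCat Φ G ⥤ A where
  obj x := x.a
  map f := f.v

def PropertyF {C : Type*} [Category C] {E : Type*} [Category E] (F : C ⥤ E) : Prop :=
  ∀ e : E, ∃ (n : ℕ) (c : Fin n → C) (f : ∀ i, e ⟶ F.obj (c i)),
    ∀ (c' : C) (g : e ⟶ F.obj c'), ∃ (i : Fin n) (h : c i ⟶ c'), g = f i ≫ F.map h

/-- If `G : A ⥤ B` is a discrete opfibration and `Φ : D ⥤ B` satisfies property (F),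
then the projection `Φ' : D ×_B A ⥤ A` satisfies property (F). -/
theorem pullback_propertyF (Φ : D ⥤ B) (G : A ⥤ B)
    (hG : DiscreteOpfibration G) (hΦ : PropertyF Φ) : PropertyF (pullbackSnd Φ G) := by
  intro a
  obtain ⟨n, d, f, hf⟩ := hΦ (G.obj a)
  choose fp hfp _ using fun i => hG a (Φ.obj (d i)) (f i)
  choose h hcomm using hfp
  refine ⟨n, fun i => ⟨d i, (fp i).1, (h i).symm⟩, fun i => (fp i).2, ?_⟩
  rintro ⟨d', a', eq'⟩ g
  obtain ⟨i, k, hk⟩ := hf d' (G.map g ≫ eqToHom eq'.symm)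
  obtain ⟨⟨a'', w⟩, ⟨h2, hc2⟩, -⟩ :=
    hG (fp i).1 (G.obj a') (eqToHom (h i) ≫ Φ.map k ≫ eqToHom eq')
  obtain ⟨c0, -, hu0⟩ := hG a (G.obj a') (G.map g)
  have key : (⟨a'', (fp i).2 ≫ w⟩ : Σ a', a ⟶ a') = ⟨a', g⟩ := by
    rw [hu0 ⟨a'', (fp i).2 ≫ w⟩ ?_, hu0 ⟨a', g⟩ ⟨rfl, by simp⟩]
    refine ⟨h2, ?_⟩
    have : G.map g = f i ≫ Φ.map k ≫ eqToHom eq' := by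
      simp only [← Category.assoc, ← hk]; exact (fun {X Y Z : B} (f : X ⟶ Y) (p : Y = Z) => by subst p; simp : ∀ {X Y Z : B} (f : X ⟶ Y) (p : Y = Z), f = (f ≫ eqToHom p) ≫ eqToHom p.symm) (G.map g) eq'.symm
    simp only [Functor.map_comp, Category.assoc, hc2, this]
    rw [← Category.assoc, hcomm i]
    exact this.symm
  injection key with e1 e2
  subst e1
  have e2' : (fp i).2 ≫ w = g := eq_of_heq e2
  have h2' : eqToHom h2 = 𝟙 _ := by simp
  refine ⟨i, ⟨k, w, ?_⟩, ?_⟩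
  · show Φ.map k ≫ eqToHom eq' = eqToHom (h i).symm ≫ G.map w
    rw [h2', Category.comp_id] at hc2
    rw [hc2]; simp
  · exact e2'.symm
end

section
/- The opposite of the category gOS of graded ordered surjections satisfies property (G2): for every object, the poset |x / gOS^op| is Noetherian. -/
open CategoryTheory List

/-- An ordered surjection `f : Fin n → Fin m`: a surjective map such that the minima of the
fibers are strictly increasing, i.e. for `i < j` the minimum of `f⁻¹(i)` is smaller than every
element of `f⁻¹(j)`. -/
def OrderedSurj {n m : ℕ} (f : Fin n → Fin m) : Prop :=
  Function.Surjective f ∧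
    ∀ i j : Fin m, i < j → ∃ a : Fin n, f a = i ∧ ∀ b : Fin n, f b = j → a < b

noncomputable def gOSencode {n m : ℕ} (u : Fin m → Fin n) : List (Fin n × Bool) :=
  List.ofFn (fun k => (u k, decide (∀ k', u k' = u k → k ≤ k')))

lemma gOS_factor_of_sublist {n mi mj : ℕ} (u : Fin mi → Fin n) (v : Fin mj → Fin n)
    (hu : Function.Surjective u) (hsub : gOSencode u <+ gOSencode v) :
    ∃ h : Fin mj → Fin mi, OrderedSurj h ∧ ∀ x, v x = u (h x) := by
  classical
  obtain ⟨e, he⟩ := List.sublist_iff_exists_orderEmbedding_getElem?_eq.mp hsub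
  have key : ∀ t : Fin mi, ∃ ht : e t < mj,
      v ⟨e t, ht⟩ = u t ∧
      ((∀ k', v k' = v ⟨e t, ht⟩ → (⟨e t, ht⟩ : Fin mj) ≤ k') ↔ (∀ k', u k' = u t → t ≤ k')) := by
    intro t
    have h1 := he t
    rw [gOSencode, gOSencode, List.getElem?_ofFn, List.getElem?_ofFn] at h1
    rw [dif_pos t.isLt] at h1
    by_cases hlt : e t < mj
    · rw [dif_pos hlt] at h1
      refine ⟨hlt, ?_, ?_⟩
      · have := (Prod.mk.injEq _ _ _ _).mp (Option.some.inj h1)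
        simpa using this.1.symm
      · have := (Prod.mk.injEq _ _ _ _).mp (Option.some.inj h1)
        have h2 := this.2
        rw [decide_eq_decide] at h2
        constructor
        · intro hp k' hk'
          simpa using h2.mpr (by simpa using hp) k' (by simpa using hk')
        · intro hp k' hk'
          simpa using h2.mp (by simpa using hp) k' (by simpa using hk')
    · rw [dif_neg hlt] at h1; exact absurd h1 (by simp)
  have hlt : ∀ t : Fin mi, e t < mj := fun t => (key t).1
  set φ : Fin mi → Fin mj := fun t => ⟨e t, hlt t⟩ with hφdef
  have φmono : StrictMono φ := by
    intro a b hab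
    show (⟨e a, hlt a⟩ : Fin mj) < ⟨e b, hlt b⟩
    rw [Fin.mk_lt_mk]
    exact e.strictMono hab
  have hval : ∀ t, v (φ t) = u t := fun t => (key t).2.1
  have hflag : ∀ t : Fin mi, (∀ k', u k' = u t → t ≤ k') →
      (∀ k', v k' = v (φ t) → φ t ≤ k') := fun t hp => (key t).2.2.mpr hp
  -- Lemma A: nonemptiness
  have hA : ∀ k : Fin mj, ∃ t : Fin mi, φ t ≤ k ∧ u t = v k := by
    intro k
    obtain ⟨t0, ht0⟩ := hu (v k)
    have hne : (Finset.univ.filter (fun q => u q = v k)).Nonempty :=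
      ⟨t0, by simp [ht0]⟩
    set p := (Finset.univ.filter (fun q => u q = v k)).min' hne with hpdef
    have hp1 : u p = v k := by
      have := (Finset.univ.filter (fun q => u q = v k)).min'_mem hne
      simpa using this
    have hp2 : ∀ q, u q = u p → p ≤ q := by
      intro q hq
      exact Finset.min'_le _ q (by simp [hq, hp1])
    refine ⟨p, ?_, hp1⟩
    exact hflag p hp2 k (by rw [hval p, hp1])
  have hne : ∀ k : Fin mj, (Finset.univ.filter (fun t => φ t ≤ k ∧ u t = v k)).Nonempty := by
    intro k; obtain ⟨t, h1, h2⟩ := hA k; exact ⟨t, by simp [h1, h2]⟩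
  set h : Fin mj → Fin mi := fun k => (Finset.univ.filter (fun t => φ t ≤ k ∧ u t = v k)).max' (hne k)
    with hhdef
  have hmem : ∀ k, φ (h k) ≤ k ∧ u (h k) = v k := by
    intro k
    have := (Finset.univ.filter (fun t => φ t ≤ k ∧ u t = v k)).max'_mem (hne k)
    simpa using this
  have hmax : ∀ k t, φ t ≤ k → u t = v k → t ≤ h k := fun k t h1 h2 =>
    Finset.le_max' _ t (by simp [h1, h2])
  have hhφ : ∀ t, h (φ t) = t := by
    intro t
    refine le_antisymm ?_ (hmax _ t le_rfl (hval t).symm)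
    exact (φmono.le_iff_le).mp (hmem (φ t)).1
  refine ⟨h, ⟨fun t => ⟨φ t, hhφ t⟩, ?_⟩, fun x => (hmem x).2.symm⟩
  intro t t' htt'
  refine ⟨φ t, hhφ t, fun b hb => ?_⟩
  have : φ t' ≤ b := by rw [← hb]; exact (hmem b).1
  exact lt_of_lt_of_le (φmono htt') this

/-- The opposite of the category `gOS` of graded ordered surjections satisfies property (G2):
for every object `n` of `gOS`, any sequence of graded ordered surjections `(fᵢ, gᵢ)` into
`{1,…,n}` (i.e. morphisms out of `n` in `gOSᵒᵖ`) contains indices `i < j` such that the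
`j`-th morphism factors through the `i`-th one in `gOS` by a graded ordered surjection
`(h, gₕ)`, where the grading of the composite is `g_{f∘h}(x) = g_f(x) + Σ_{y ∈ f⁻¹(x)} gₕ(y)`. -/
theorem gOS_op_propertyG2 (n : ℕ) (m : ℕ → ℕ)
    (f : ∀ i : ℕ, Fin (m i) → Fin n) (hf : ∀ i, OrderedSurj (f i))
    (g : ℕ → Fin n → ℕ) :
    ∃ i j : ℕ, i < j ∧
      ∃ (h : Fin (m j) → Fin (m i)) (gh : Fin (m i) → ℕ),
        OrderedSurj h ∧ (∀ x : Fin (m j), f j x = f i (h x)) ∧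
        (∀ x : Fin n,
          g j x = g i x + ∑ y ∈ Finset.univ.filter (fun y => f i y = x), gh y) := by
  classical
  have hEq : (Set.univ : Set (Fin n × Bool)).PartiallyWellOrderedOn (· = ·) := by
    intro F
    obtain ⟨a, b, hab, hFab⟩ := Finite.exists_ne_map_eq_of_infinite F
    rcases hab.lt_or_gt with hlt | hlt
    · exact ⟨a, b, hlt, congrArg Subtype.val hFab⟩
    · exact ⟨b, a, hlt, congrArg Subtype.val hFab.symm⟩
  have hH := Set.PartiallyWellOrderedOn.partiallyWellOrderedOn_sublistForall₂ (· = ·) hEq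
  haveI : IsPreorder (List (Fin n × Bool)) (SublistForall₂ (fun x1 x2 : Fin n × Bool => x1 = x2)) := {}
  obtain ⟨e, hmono⟩ := hH.exists_monotone_subseq (f := fun i => gOSencode (f i))
    (fun i => by intro x _; trivial)
  have hPi : (Set.univ : Set (Fin n → ℕ)).IsPWO := by
    have inst : ∀ i : Fin n, IsWellOrder ((fun _ : Fin n => ℕ) i) (· < ·) := by
      intro i
      show IsWellOrder ℕ (· < ·)
      infer_instance
    exact Set.isPWO_of_wellQuasiOrderedLE _
  obtain ⟨a, b, hab, hle⟩ := hPi.exists_lt (f := fun k => g (e k)) (fun k => Set.mem_univ _)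
  refine ⟨e a, e b, e.strictMono hab, ?_⟩
  have hsub : gOSencode (f (e a)) <+ gOSencode (f (e b)) := by
    have h1 := hmono a b hab.le
    obtain ⟨l, hl1, hl2⟩ := List.sublistForall₂_iff.mp h1
    rw [List.forall₂_eq_eq_eq] at hl1
    exact hl1 ▸ hl2
  obtain ⟨h, hOS, hfac⟩ := gOS_factor_of_sublist _ _ (hf (e a)).1 hsub
  set sx : Fin n → Fin (m (e a)) := Function.surjInv (hf (e a)).1 with hsxdef
  refine ⟨h, fun y => if y = sx (f (e a) y) then g (e b) (f (e a) y) - g (e a) (f (e a) y) else 0,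
    hOS, hfac, ?_⟩
  intro x
  have hgle : g (e a) x ≤ g (e b) x := hle x
  have hsx : f (e a) (sx x) = x := Function.surjInv_eq _ x
  have hsum : ∑ y ∈ Finset.univ.filter (fun y => f (e a) y = x),
      (if y = sx (f (e a) y) then g (e b) (f (e a) y) - g (e a) (f (e a) y) else 0)
      = g (e b) x - g (e a) x := by
    rw [Finset.sum_congr rfl
      (fun y hy => show _ = if y = sx x then g (e b) x - g (e a) x else 0 by
        have := (Finset.mem_filter.mp hy).2
        rw [this])]
    rw [Finset.sum_ite_eq' _ (sx x) (fun _ => g (e b) x - g (e a) x)]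
    rw [if_pos (by simp [hsx])]
  rw [hsum]
  omega
end
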